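/- arXiv:1507.06805 — 5 statements merged into one kernel-verified Lean document; each statement's English description precedes it below -/
import Mathlib

section
/- Let m ≥ 1 be a natural number, let k be a natural number with k ≤ m − 1, let z be a nonzero complex number, and let 0 < r < |z|. Then (1/(2πi)) · ∮_{|η|=r} ((η/z)^m − 1)/(η − z) · η^(k−m) dη = z^(k−m). (This is the residue at η = 0 of the 11-entry of the Fredholm kernel K(z,η) of the model problem applied to η^{k−m}.) -/
open Complex Real

lemma circleIntegral_finset_sum {ι : Type*} (s : Finset ι) (f : ι → ℂ → ℂ) (c : ℂ) (R : ℝ)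
    (h : ∀ i ∈ s, CircleIntegrable (f i) c R) :
    (∮ z in C(c, R), ∑ i ∈ s, f i z) = ∑ i ∈ s, ∮ z in C(c, R), f i z := by
  simp only [circleIntegral, Finset.smul_sum]
  exact intervalIntegral.integral_finset_sum fun i hi => (h i hi).out

theorem residue_K11 (m k : ℕ) (hm : 1 ≤ m) (hk : k ≤ m - 1)
    (z : ℂ) (hz : z ≠ 0) (r : ℝ) (hr : 0 < r) (hrz : r < ‖z‖) :
    (1 / (2 * Real.pi * Complex.I)) *
        (∮ η in C(0, r), ((η / z) ^ m - 1) / (η - z) * η ^ ((k : ℤ) - m)) =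
      z ^ ((k : ℤ) - m) := by
  have hzm : (z : ℂ) ^ m ≠ 0 := pow_ne_zero _ hz
  have hcongr : Set.EqOn (fun η : ℂ => ((η / z) ^ m - 1) / (η - z) * η ^ ((k : ℤ) - m))
      (fun η : ℂ => ∑ j ∈ Finset.range m, z ^ (-1 - (j : ℤ)) * (η - 0) ^ ((j : ℤ) + k - m))
      (Metric.sphere (0:ℂ) r) := by
    intro η hη
    simp only [Metric.mem_sphere, dist_zero_right] at hη
    have hη0 : η ≠ 0 := by
      intro h; rw [h] at hη; simp at hη; linarith
    have hηz : η ≠ z := by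
      intro h; rw [h] at hη; linarith
    have hne : η - z ≠ 0 := sub_ne_zero.2 hηz
    have h1 : (η / z) ^ m - 1 = (η ^ m - z ^ m) * ((z : ℂ) ^ m)⁻¹ := by
      field_simp
      rw [div_pow, sub_mul, div_mul_cancel₀ _ hzm, one_mul]
    simp only
    rw [h1, ← geom_sum₂_mul η z m, mul_right_comm, mul_div_assoc,
      div_self hne, mul_one, Finset.sum_mul, Finset.sum_mul]
    refine Finset.sum_congr rfl fun j hj => ?_
    rw [Finset.mem_range] at hj
    calc η ^ j * z ^ (m - 1 - j) * ((z:ℂ) ^ m)⁻¹ * η ^ ((k:ℤ) - m)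
        = (z ^ (((m - 1 - j : ℕ) : ℤ)) * z ^ (-(m:ℤ))) * (η ^ ((j:ℕ):ℤ) * η ^ ((k:ℤ) - m)) := by
          rw [zpow_natCast, zpow_natCast, ← zpow_natCast z m, ← zpow_neg]; ring
      _ = z ^ (((m - 1 - j : ℕ) : ℤ) + -(m:ℤ)) * η ^ (((j:ℕ):ℤ) + ((k:ℤ) - m)) := by
          rw [← zpow_add₀ hz, ← zpow_add₀ hη0]
      _ = z ^ (-1 - (j : ℤ)) * (η - 0) ^ ((j:ℤ) + k - m) := by
          rw [sub_zero, show ((m - 1 - j : ℕ) : ℤ) + -(m:ℤ) = -1 - j by omega,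
            show ((j:ℕ):ℤ) + ((k:ℤ) - m) = (j:ℤ) + k - m by ring]
  rw [circleIntegral.integral_congr hr.le hcongr, circleIntegral_finset_sum]
  · rw [Finset.sum_eq_single (m - 1 - k)]
    · rw [circleIntegral.integral_const_mul,
        show ((m - 1 - k : ℕ) : ℤ) + k - m = -1 by omega]
      simp only [zpow_neg_one]
      rw [circleIntegral.integral_sub_inv_of_mem_ball (by simpa using hr),
        show (-1 - ((m - 1 - k : ℕ) : ℤ)) = (k:ℤ) - m by omega]
      have h2pi : (2 * (π : ℂ) * I) ≠ 0 := by
        simp [Real.pi_ne_zero, I_ne_zero]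
      field_simp
    · intro j hj hjne
      rw [Finset.mem_range] at hj
      rw [circleIntegral.integral_const_mul,
        circleIntegral.integral_sub_zpow_of_ne (by omega), mul_zero]
    · intro h
      exact absurd (Finset.mem_range.2 (by omega)) h
  · intro j hj
    have : CircleIntegrable (fun η : ℂ => (η - 0) ^ ((j:ℤ) + k - m)) 0 r :=
      circleIntegrable_sub_zpow_iff.mpr (Or.inr (Or.inr (by simp [abs_of_pos hr, hr.ne])))
    exact this.const_mul _
end

section
/- Let m ≥ 1 be a natural number, let k be a natural number with k ≤ m − 1, let z be a nonzero complex number, and let 0 < r < |z|. Then (1/(2πi)) · ∮_{|η|=r} (e^η·z^m − e^z·η^m)/(η − z) · η^(k−m) dη = −z^k · e_{m−k}(z). (This is the residue at η = 0 of the 21-entry of the Fredholm kernel K(z,η) of the model problem applied to η^{k−m}.) -/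
open Complex Real

/-- Truncated exponential `e_k(z) = ∑_{i<k} z^i / i!`. -/
noncomputable def truncExp (k : ℕ) (z : ℂ) : ℂ :=
  ∑ i ∈ Finset.range k, z ^ i / (Nat.factorial i : ℂ)

/-- Cauchy differentiation formula for `exp` at `0`. -/
lemma circleIntegral_exp_zpow (r : ℝ) (hr : 0 < r) (p : ℕ) :
    (∮ η in C(0, r), Complex.exp η * η ^ (-(p : ℤ) - 1)) =
      2 * Real.pi * Complex.I / (Nat.factorial p : ℂ) := by
  set R : NNReal := ⟨r, hr.le⟩ with hR
  have hR0 : 0 < R := by exact_mod_cast hr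
  have h2 : HasFPowerSeriesOnBall Complex.exp
      (cauchyPowerSeries Complex.exp 0 R) 0 R :=
    Complex.differentiable_exp.differentiableOn.hasFPowerSeriesOnBall hR0
  have h1 : HasFPowerSeriesAt (NormedSpace.exp)
      (NormedSpace.expSeries ℂ ℂ) (0 : ℂ) :=
    (NormedSpace.hasFPowerSeriesOnBall_exp_of_radius_pos
      (𝕂 := ℂ) (𝔸 := ℂ) (NormedSpace.expSeries_radius_pos ℂ ℂ)).hasFPowerSeriesAt
  have h1' : HasFPowerSeriesAt Complex.exp (NormedSpace.expSeries ℂ ℂ) (0 : ℂ) := by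
    rw [Complex.exp_eq_exp_ℂ]; exact h1
  have heq := h1'.eq_formalMultilinearSeries h2.hasFPowerSeriesAt
  have happ := congrFun heq p
  have h3 : (NormedSpace.expSeries ℂ ℂ p fun _ => (1 : ℂ)) =
      (cauchyPowerSeries Complex.exp 0 R p fun _ => (1 : ℂ)) := by rw [happ]
  rw [NormedSpace.expSeries_apply_eq_div, cauchyPowerSeries_apply] at h3
  rw [show ((R : ℝ)) = r from rfl] at h3
  have hint : (∮ z in C(0, r), ((1 : ℂ) / (z - 0)) ^ p • (z - 0)⁻¹ • Complex.exp z) =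
      ∮ η in C(0, r), Complex.exp η * η ^ (-(p : ℤ) - 1) := by
    refine circleIntegral.integral_congr hr.le fun η hη => ?_
    have hη0 : η ≠ 0 := by
      rintro rfl
      rw [Metric.mem_sphere, dist_self] at hη
      linarith
    have hpow : η ^ (-(p : ℤ) - 1) = (η ^ p)⁻¹ * η⁻¹ := by
      rw [zpow_sub₀ hη0, zpow_neg, zpow_natCast, zpow_one]
      ring
    simp only [sub_zero, smul_eq_mul, hpow, one_div, inv_pow]
    ring
  rw [hint] at h3
  have h2pi : (2 * (Real.pi : ℂ) * Complex.I) ≠ 0 := by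
    simp [Real.pi_ne_zero, Complex.I_ne_zero, Complex.ofReal_ne_zero]
  have hfac : (Nat.factorial p : ℂ) ≠ 0 := by
    exact_mod_cast Nat.factorial_ne_zero p
  rw [smul_eq_mul] at h3
  field_simp at h3 ⊢
  linear_combination -h3

theorem residue_K21 (m k : ℕ) (hm : 1 ≤ m) (hk : k ≤ m - 1)
    (z : ℂ) (hz : z ≠ 0) (r : ℝ) (hr : 0 < r) (hrz : r < ‖z‖) :
    (1 / (2 * Real.pi * Complex.I)) *
        (∮ η in C(0, r),
          (Complex.exp η * z ^ m - Complex.exp z * η ^ m) / (η - z) * η ^ ((k : ℤ) - m)) =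
      -z ^ k * truncExp (m - k) z := by
  set n : ℕ := m - k with hn
  have hkm : k < m := by omega
  have hmkn : m = k + n := by omega
  have hn1 : 1 ≤ n := by omega
  set g : ℂ → ℂ := fun η => (z ^ k * Complex.exp η - Complex.exp z * η ^ k) / (η - z)
    with hg
  set F : ℕ → ℂ → ℂ := fun j η => z ^ (m - 1 - j) * (Complex.exp η * η ^ ((j : ℤ) - n))
    with hF
  have hzsphere : ∀ η ∈ Metric.sphere (0 : ℂ) r, η ≠ 0 ∧ η - z ≠ 0 := by
    intro η hη
    rw [Metric.mem_sphere, dist_zero_right] at hη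
    constructor
    · rintro rfl; rw [norm_zero] at hη; linarith
    · intro h
      have hez : η = z := sub_eq_zero.mp h
      rw [hez] at hη
      linarith
  -- pointwise identity on the sphere
  have key : Set.EqOn
      (fun η => (Complex.exp η * z ^ m - Complex.exp z * η ^ m) / (η - z) * η ^ ((k : ℤ) - m))
      (fun η => g η - ∑ j ∈ Finset.range n, F j η) (Metric.sphere (0 : ℂ) r) := by
    intro η hη
    obtain ⟨hη0, hηz⟩ := hzsphere η hη
    have hηn : (η : ℂ) ^ n ≠ 0 := pow_ne_zero _ hη0
    have e1 : η ^ ((k : ℤ) - m) = η ^ k / η ^ m := by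
      rw [zpow_sub₀ hη0, zpow_natCast, zpow_natCast]
    have e2 : ∀ j ∈ Finset.range n, F j η =
        z ^ k * Complex.exp η * (η ^ j * z ^ (n - 1 - j)) / η ^ n := by
      intro j hj
      rw [Finset.mem_range] at hj
      have hmj : m - 1 - j = k + (n - 1 - j) := by omega
      rw [hF]
      simp only
      rw [hmj, zpow_sub₀ hη0, zpow_natCast, zpow_natCast, pow_add]
      ring
    simp only
    rw [Finset.sum_congr rfl e2]
    have hgeom : (∑ j ∈ Finset.range n, η ^ j * z ^ (n - 1 - j)) * (η - z) = η ^ n - z ^ n :=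
      geom_sum₂_mul η z n
    simp only [hg, e1]
    rw [← Finset.sum_div, ← Finset.mul_sum]
    have hm' : η ^ m = η ^ k * η ^ n := by rw [hmkn, pow_add]
    have hz' : z ^ m = z ^ k * z ^ n := by rw [hmkn, pow_add]
    set S := ∑ j ∈ Finset.range n, η ^ j * z ^ (n - 1 - j) with hS
    have hηm : (η : ℂ) ^ m ≠ 0 := pow_ne_zero _ hη0
    have hclear : (Complex.exp η * z ^ m - Complex.exp z * η ^ m) * η ^ k * η ^ n
        = ((z ^ k * Complex.exp η - Complex.exp z * η ^ k) * η ^ n -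
            (η - z) * (z ^ k * Complex.exp η * S)) * η ^ m := by
      rw [hm', hz']
      linear_combination (z ^ k * Complex.exp η * η ^ k * η ^ n) * hgeom
    rw [div_mul_div_comm, div_sub_div _ _ hηz hηn,
      div_eq_div_iff (mul_ne_zero hηz hηm) (mul_ne_zero hηz hηn)]
    linear_combination (η - z) * hclear
  -- continuity / integrability
  have hcontF : ∀ j ∈ Finset.range n, ContinuousOn (F j) (Metric.sphere (0 : ℂ) r) := by
    intro j _
    refine continuousOn_const.mul (Complex.continuous_exp.continuousOn.mul ?_)
    intro η hη
    exact (continuousAt_zpow₀ η _ (Or.inl (hzsphere η hη).1)).continuousWithinAt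
  have hcontg : ∀ s ⊆ Metric.closedBall (0 : ℂ) r, ContinuousOn g s := by
    intro s hs
    refine ContinuousOn.div
      ((continuousOn_const.mul Complex.continuous_exp.continuousOn).sub
        (continuousOn_const.mul (continuousOn_pow k)))
      ((continuousOn_id).sub continuousOn_const) ?_
    intro η hη
    have hη' := hs hη
    rw [Metric.mem_closedBall, dist_zero_right] at hη'
    intro h
    have hez : η = z := sub_eq_zero.mp h
    rw [hez] at hη'
    linarith
  have hintg : CircleIntegrable g 0 r :=
    (hcontg _ Metric.sphere_subset_closedBall).circleIntegrable hr.le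
  have hintF : ∀ j ∈ Finset.range n, CircleIntegrable (F j) 0 r :=
    fun j hj => (hcontF j hj).circleIntegrable hr.le
  have hintSum : CircleIntegrable (fun η => ∑ j ∈ Finset.range n, F j η) 0 r := by
    refine ContinuousOn.circleIntegrable hr.le ?_
    exact continuousOn_finset_sum _ hcontF
  rw [circleIntegral.integral_congr hr.le key,
    circleIntegral.integral_sub hintg hintSum]
  -- the analytic part integrates to zero
  have hg0 : (∮ η in C(0, r), g η) = 0 := by
    refine circleIntegral_eq_zero_of_differentiable_on_off_countable hr.le
      Set.countable_empty (hcontg _ le_rfl) ?_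
    intro η hη
    have hη' : η ∈ Metric.ball (0 : ℂ) r := hη.1
    rw [Metric.mem_ball, dist_zero_right] at hη'
    have hηz : η - z ≠ 0 := by
      intro h
      have hez : η = z := sub_eq_zero.mp h
      rw [hez] at hη'
      linarith
    exact DifferentiableAt.div (by fun_prop) (by fun_prop) hηz
  -- the sum of integrals
  have hsum : (∮ η in C(0, r), ∑ j ∈ Finset.range n, F j η)
      = ∑ j ∈ Finset.range n, ∮ η in C(0, r), F j η := by
    simp only [circleIntegral, Finset.smul_sum]
    exact intervalIntegral.integral_finset_sum
      fun j hj => (circleIntegrable_iff r).mp (hintF j hj)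
  rw [hg0, hsum]
  -- value of each integral
  have hFj : ∀ j ∈ Finset.range n, (∮ η in C(0, r), F j η)
      = z ^ (m - 1 - j) * (2 * Real.pi * Complex.I / ((Nat.factorial (n - 1 - j) : ℂ))) := by
    intro j hj
    rw [Finset.mem_range] at hj
    rw [hF]
    simp only
    rw [circleIntegral.integral_const_mul]
    have he : ((j : ℤ) - n) = -((n - 1 - j : ℕ) : ℤ) - 1 := by push_cast; omega
    rw [he, circleIntegral_exp_zpow r hr]
  rw [Finset.sum_congr rfl hFj]
  -- reindex and conclude
  have hrefl : ∑ j ∈ Finset.range n,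
        z ^ (m - 1 - j) * (2 * Real.pi * Complex.I / ((Nat.factorial (n - 1 - j) : ℂ)))
      = ∑ j ∈ Finset.range n,
        2 * Real.pi * Complex.I * (z ^ k * (z ^ j / (Nat.factorial j : ℂ))) := by
    rw [← Finset.sum_range_reflect
      (fun j => 2 * (Real.pi : ℂ) * Complex.I * (z ^ k * (z ^ j / (Nat.factorial j : ℂ)))) n]
    refine Finset.sum_congr rfl fun j hj => ?_
    rw [Finset.mem_range] at hj
    have h1 : m - 1 - j = k + (n - 1 - j) := by omega
    rw [h1, pow_add]
    ring
  rw [hrefl, ← Finset.mul_sum, ← Finset.mul_sum, truncExp]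
  have h2pi : (2 * (Real.pi : ℂ) * Complex.I) ≠ 0 := by
    simp [Real.pi_ne_zero, Complex.I_ne_zero, Complex.ofReal_ne_zero]
  field_simp
  ring
end

section
/- Let m ≥ 1 be a natural number. The family of complex polynomials q_j(X) = X^j · e_{m−j}(X) for j = 0, 1, …, m − 1, where e_k(X) = Σ_{i=0}^{k−1} X^i/i!, is linearly independent over ℂ, each q_j has degree m − 1, and the family spans the space of complex polynomials of degree at most m − 1. In particular, for every k with 0 ≤ k ≤ m − 1 there exist unique coefficients a_{k0}, …, a_{k,m−1} ∈ ℂ with X^k = Σ_{j=0}^{m−1} a_{kj} · X^j · e_{m−j}(X). -/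
open Polynomial

/-- Truncated exponential as a polynomial: `e_k(X) = ∑_{i<k} X^i / i!`. -/
noncomputable def truncExpPoly (k : ℕ) : Polynomial ℂ :=
  ∑ i ∈ Finset.range k, Polynomial.C ((Nat.factorial i : ℂ)⁻¹) * Polynomial.X ^ i

lemma coeff_truncExpPoly (k n : ℕ) :
    (truncExpPoly k).coeff n = if n < k then ((Nat.factorial n : ℂ))⁻¹ else 0 := by
  unfold truncExpPoly
  rw [Polynomial.finset_sum_coeff]
  simp [Polynomial.coeff_C_mul, Polynomial.coeff_X_pow, Finset.sum_ite_eq']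

lemma coeff_q_aux (m j n : ℕ) :
    ((Polynomial.X : Polynomial ℂ) ^ j * truncExpPoly (m - j)).coeff n =
      if j ≤ n ∧ n < m then ((Nat.factorial (n - j) : ℂ))⁻¹ else 0 := by
  rw [mul_comm, Polynomial.coeff_mul_X_pow', coeff_truncExpPoly]
  split_ifs with h1 h2 h3 h3 <;> first | rfl | (exfalso; omega)

lemma indep_q_aux (m : ℕ) :
    LinearIndependent ℂ
      (fun j : Fin m => (Polynomial.X : Polynomial ℂ) ^ (j : ℕ) * truncExpPoly (m - j)) := by
  rw [Fintype.linearIndependent_iff]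
  intro g hg
  have key : ∀ n : ℕ, ∀ i : Fin m, (i : ℕ) = n → g i = 0 := by
    intro n
    induction n using Nat.strong_induction_on with
    | _ n IH =>
      intro i hi
      have hc := congrArg (fun p => Polynomial.coeff p i) hg
      simp only [Polynomial.finset_sum_coeff, Polynomial.coeff_smul, smul_eq_mul,
        Polynomial.coeff_zero] at hc
      rw [Finset.sum_eq_single i] at hc
      · rw [coeff_q_aux] at hc
        simp only [le_refl, i.isLt, and_self, if_true, Nat.sub_self, Nat.factorial_zero,
          Nat.cast_one, inv_one, mul_one] at hc
        exact hc
      · intro b _ hb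
        rcases lt_or_gt_of_ne (fun h : (b:ℕ) = (i:ℕ) => hb (Fin.ext h)) with h | h
        · rw [IH b (hi ▸ h) b rfl, zero_mul]
        · rw [coeff_q_aux, if_neg (by omega : ¬((b:ℕ) ≤ (i:ℕ) ∧ (i:ℕ) < m)), mul_zero]
      · simp
  exact fun i => key i i rfl

lemma deg_q_aux (m : ℕ) (hm : 1 ≤ m) (j : Fin m) :
    ((Polynomial.X : Polynomial ℂ) ^ (j : ℕ) * truncExpPoly (m - j)).degree = (m - 1 : ℕ) := by
  apply le_antisymm
  · rw [Polynomial.degree_le_iff_coeff_zero]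
    intro n hn
    rw [Nat.cast_lt] at hn
    rw [coeff_q_aux, if_neg (by omega)]
  · apply Polynomial.le_degree_of_ne_zero
    rw [coeff_q_aux, if_pos ⟨by omega, by omega⟩]
    exact inv_ne_zero (by exact_mod_cast Nat.factorial_ne_zero _)

lemma span_q_aux (m : ℕ) (hm : 1 ≤ m) :
    Submodule.span ℂ
        (Set.range fun j : Fin m =>
          (Polynomial.X : Polynomial ℂ) ^ (j : ℕ) * truncExpPoly (m - j))
      = Polynomial.degreeLT ℂ m := by
  set v := fun j : Fin m => (Polynomial.X : Polynomial ℂ) ^ (j : ℕ) * truncExpPoly (m - j) with hv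
  have hmem : ∀ j, v j ∈ Polynomial.degreeLT ℂ m := by
    intro j
    rw [Polynomial.mem_degreeLT, deg_q_aux m hm j, Nat.cast_lt]
    omega
  set v' : Fin m → Polynomial.degreeLT ℂ m := fun j => ⟨v j, hmem j⟩ with hv'
  have hcomp : (Polynomial.degreeLT ℂ m).subtype ∘ v' = v := rfl
  have hind : LinearIndependent ℂ v' :=
    LinearIndependent.of_comp (Polynomial.degreeLT ℂ m).subtype (hcomp ▸ indep_q_aux m)
  have hfr : Module.finrank ℂ (Polynomial.degreeLT ℂ m) = m := by
    rw [LinearEquiv.finrank_eq (Polynomial.degreeLTEquiv ℂ m)]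
    simp
  have : FiniteDimensional ℂ (Polynomial.degreeLT ℂ m) :=
    Module.finite_of_finrank_pos (by omega)
  have hspan : Submodule.span ℂ (Set.range v') = ⊤ :=
    hind.span_eq_top_of_card_eq_finrank' (by simp [hfr])
  have := congrArg (Submodule.map (Polynomial.degreeLT ℂ m).subtype) hspan
  rwa [Submodule.map_span, Submodule.map_subtype_top, ← Set.range_comp, hcomp] at this

lemma uniq_q_aux (m : ℕ) (hm : 1 ≤ m) :
    ∀ k : ℕ, k ≤ m - 1 →
      ∃! a : Fin m → ℂ,
        (Polynomial.X : Polynomial ℂ) ^ k =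
          ∑ j : Fin m,
            Polynomial.C (a j) * (Polynomial.X ^ (j : ℕ) * truncExpPoly (m - j)) := by
  intro k hk
  set v := fun j : Fin m => (Polynomial.X : Polynomial ℂ) ^ (j : ℕ) * truncExpPoly (m - j)
  have hmem : (Polynomial.X : Polynomial ℂ) ^ k ∈ Submodule.span ℂ (Set.range v) := by
    rw [span_q_aux m hm, Polynomial.mem_degreeLT, Polynomial.degree_X_pow, Nat.cast_lt]
    omega
  rw [Submodule.mem_span_range_iff_exists_fun] at hmem
  obtain ⟨c, hc⟩ := hmem
  refine ⟨c, ?_, ?_⟩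
  · rw [← hc]
    simp [Polynomial.smul_eq_C_mul, v]
  · intro b hb
    have hind := (Fintype.linearIndependent_iff.mp (indep_q_aux m)) (b - c)
    funext i
    have : ∑ j, (b - c) j • v j = 0 := by
      simp only [Pi.sub_apply, sub_smul, Finset.sum_sub_distrib]
      rw [sub_eq_zero]
      simp only [Polynomial.smul_eq_C_mul]
      rw [← hb, ← hc]
      simp [Polynomial.smul_eq_C_mul]
    have := hind this i
    simpa [sub_eq_zero] using this

theorem basis_of_truncExp_polynomials (m : ℕ) (hm : 1 ≤ m) :
    LinearIndependent ℂ
        (fun j : Fin m => (Polynomial.X : Polynomial ℂ) ^ (j : ℕ) * truncExpPoly (m - j)) ∧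
      (∀ j : Fin m,
        ((Polynomial.X : Polynomial ℂ) ^ (j : ℕ) * truncExpPoly (m - j)).degree
          = (m - 1 : ℕ)) ∧
      Submodule.span ℂ
          (Set.range fun j : Fin m =>
            (Polynomial.X : Polynomial ℂ) ^ (j : ℕ) * truncExpPoly (m - j))
        = Polynomial.degreeLT ℂ m ∧
      ∀ k : ℕ, k ≤ m - 1 →
        ∃! a : Fin m → ℂ,
          (Polynomial.X : Polynomial ℂ) ^ k =
            ∑ j : Fin m,
              Polynomial.C (a j) * (Polynomial.X ^ (j : ℕ) * truncExpPoly (m - j)) := by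
  exact ⟨indep_q_aux m, deg_q_aux m hm, span_q_aux m hm, uniq_q_aux m hm⟩
end

section
/- Let m ≥ 1 and 0 ≤ k ≤ m − 1 be natural numbers and let p be a complex polynomial of degree at most m − 1 such that ζ^k = Σ_{j=0}^{m−1} (coeff_j p) · ζ^j · e_{m−j}(ζ) for all ζ ∈ ℂ. Define u(η) = −2·η^(−m)·p(η) for η ≠ 0. Then for every complex number z ≠ 0 and every radius r with 0 < r < |z|, the pair (u(z), z^k) satisfies: (i) (1/(2πi)) · ∮_{|η|=r} ((η/z)^m − 1)/(η − z) · u(η) dη = u(z), and (ii) (1/(2πi)) · ∮_{|η|=r} [ (e^η·z^m − e^z·η^m)/(η − z) · u(η) + ((z/η)^m − 1)/(η − z) · η^k ] dη = z^k. (These pairs span the 2m-dimensional kernel of the Fredholm integral equation of the model Riemann–Hilbert problem.) -/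
open Complex Real

namespace KernelAux
open Finset Function FormalMultilinearSeries

noncomputable def expTail (m : ℕ) : ℂ → ℂ := (Function.swap dslope 0)^[m] Complex.exp

lemma hasFPSAt_exp : HasFPowerSeriesAt Complex.exp (NormedSpace.expSeries ℂ ℂ) 0 := by
  rw [Complex.exp_eq_exp_ℂ]; exact NormedSpace.exp_hasFPowerSeriesAt_zero

lemma expSeries_coeff (n : ℕ) : (NormedSpace.expSeries ℂ ℂ).coeff n = ((Nat.factorial n : ℂ))⁻¹ := by
  simp [FormalMultilinearSeries.coeff, NormedSpace.expSeries, List.prod_ofFn]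

lemma hasFPSAt_expTail (m : ℕ) :
    HasFPowerSeriesAt (expTail m) (fslope^[m] (NormedSpace.expSeries ℂ ℂ)) 0 :=
  HasFPowerSeriesAt.has_fpower_series_iterate_dslope_fslope m hasFPSAt_exp

lemma expTail_zero (m : ℕ) : expTail m 0 = ((Nat.factorial m : ℂ))⁻¹ := by
  have h := (hasFPSAt_expTail m).coeff_zero 1
  have h2 : (fslope^[m] (NormedSpace.expSeries ℂ ℂ)).coeff 0 = ((Nat.factorial m : ℂ))⁻¹ := by
    rw [FormalMultilinearSeries.coeff_iterate_fslope, zero_add, expSeries_coeff]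
  rw [← h2, FormalMultilinearSeries.coeff]
  exact h.symm

lemma expTail_differentiable (m : ℕ) : Differentiable ℂ (expTail m) := by
  induction m with
  | zero => exact Complex.differentiable_exp
  | succ n ih =>
    intro x
    rcases eq_or_ne x 0 with rfl | hx
    · exact (hasFPSAt_expTail (n+1)).analyticAt.differentiableAt
    · have heq : expTail (n+1) =ᶠ[nhds x] fun y => (y - 0)⁻¹ • (expTail n y - expTail n 0) := by
        filter_upwards [isOpen_ne.mem_nhds hx] with y hy
        have : expTail (n+1) y = dslope (expTail n) 0 y := by
          simp [expTail, Function.iterate_succ_apply', Function.swap]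
        rw [this, dslope_of_ne _ hy, slope_def_module]
      rw [heq.differentiableAt_iff]
      apply DifferentiableAt.smul (c := fun y => (y - 0)⁻¹) (f := fun y => expTail n y - expTail n 0)
      · exact ((differentiableAt_id.sub_const 0).inv (by simpa using hx))
      · exact (ih x).sub_const _

lemma expTail_mul_pow (m : ℕ) : ∀ η : ℂ, η ≠ 0 → expTail m η * η ^ m = Complex.exp η - truncExp m η := by
  induction m with
  | zero => intro η hη; simp [expTail, truncExp]
  | succ n ih =>
    intro η hη
    have hstep : expTail (n+1) η = η⁻¹ * (expTail n η - expTail n 0) := by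
      have : expTail (n+1) η = dslope (expTail n) 0 η := by
        simp [expTail, Function.iterate_succ_apply', Function.swap]
      rw [this, dslope_of_ne _ hη, slope_def_module, smul_eq_mul, sub_zero]
    rw [hstep, expTail_zero, truncExp, Finset.sum_range_succ, ← truncExp]
    have := ih η hη
    field_simp
    linear_combination η * this

lemma circleIntegrable_finsetSum {ι : Type*} (s : Finset ι) {f : ι → ℂ → ℂ} {c : ℂ} {R : ℝ}
    (h : ∀ i ∈ s, CircleIntegrable (f i) c R) :
    CircleIntegrable (fun z => ∑ i ∈ s, f i z) c R := by
  classical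
  induction s using Finset.induction_on with
  | empty => simpa using circleIntegrable_const 0 c R
  | @insert a s ha ih =>
    simp only [Finset.sum_insert ha]
    exact (h a (Finset.mem_insert_self a s)).add
      (ih fun i hi => h i (Finset.mem_insert_of_mem hi))

lemma cint_add {f g : ℂ → ℂ} {c : ℂ} {R : ℝ} (hf : CircleIntegrable f c R)
    (hg : CircleIntegrable g c R) :
    (∮ z in C(c, R), (f z + g z)) = (∮ z in C(c, R), f z) + ∮ z in C(c, R), g z := by
  simp only [circleIntegral, smul_add, intervalIntegral.integral_add hf.out hg.out]

lemma cint_sum {ι : Type*} (s : Finset ι) (f : ι → ℂ → ℂ) {c : ℂ} {R : ℝ}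
    (h : ∀ i ∈ s, CircleIntegrable (f i) c R) :
    (∮ z in C(c, R), ∑ i ∈ s, f i z) = ∑ i ∈ s, ∮ z in C(c, R), f i z := by
  classical
  induction s using Finset.induction_on with
  | empty => simp [circleIntegral]
  | @insert a s ha ih =>
    simp only [Finset.sum_insert ha]
    rw [cint_add (h a (Finset.mem_insert_self a s))
      (circleIntegrable_finsetSum s fun i hi => h i (Finset.mem_insert_of_mem hi)),
      ih fun i hi => h i (Finset.mem_insert_of_mem hi)]

lemma cint_zpow {r : ℝ} (hr : 0 < r) (n : ℤ) :
    (∮ η in C((0:ℂ), r), η ^ n) = if n = -1 then 2 * Real.pi * Complex.I else 0 := by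
  split_ifs with h
  · subst h
    have h2 : (fun η : ℂ => η ^ (-1 : ℤ)) = fun η : ℂ => (η - 0)⁻¹ := by
      funext η; simp
    show circleIntegral (fun η : ℂ => η ^ (-1 : ℤ)) 0 r = _
    rw [h2]
    exact circleIntegral.integral_sub_inv_of_mem_ball (by simpa using hr)
  · have h2 : (fun η : ℂ => η ^ n) = fun η : ℂ => (η - 0) ^ n := by
      funext η; simp
    show circleIntegral (fun η : ℂ => η ^ n) 0 r = _
    rw [h2]
    exact circleIntegral.integral_sub_zpow_of_ne h 0 0 r

lemma cint_analytic_zero {f : ℂ → ℂ} {R : ℝ} (h0 : 0 ≤ R)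
    (hd : ∀ x ∈ Metric.closedBall (0:ℂ) R, DifferentiableAt ℂ f x) :
    (∮ z in C((0:ℂ), R), f z) = 0 :=
  Complex.circleIntegral_eq_zero_of_differentiable_on_off_countable h0 Set.countable_empty
    (fun x hx => (hd x hx).continuousAt.continuousWithinAt)
    (fun z hz => hd z (Metric.ball_subset_closedBall hz.1))

lemma circleIntegrable_zpow_sphere {r : ℝ} (hr : 0 < r) (c : ℂ) (n : ℤ) :
    CircleIntegrable (fun η : ℂ => c * η ^ n) 0 r := by
  apply ContinuousOn.circleIntegrable hr.le
  intro η hη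
  have hη0 : η ≠ 0 := by
    intro h
    rw [h] at hη
    simp only [Metric.mem_sphere, dist_zero_left, norm_zero] at hη
    exact hr.ne' hη.symm
  exact continuousWithinAt_const.mul (continuousAt_zpow₀ η n (Or.inl hη0)).continuousWithinAt

noncomputable def truncPoly (m : ℕ) : Polynomial ℂ :=
  ∑ b ∈ Finset.range m, Polynomial.C ((Nat.factorial b : ℂ))⁻¹ * Polynomial.X ^ b

lemma truncPoly_eval (m : ℕ) (w : ℂ) : (truncPoly m).eval w = truncExp m w := by
  simp only [truncPoly, truncExp, Polynomial.eval_finset_sum, Polynomial.eval_mul,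
    Polynomial.eval_C, Polynomial.eval_pow, Polynomial.eval_X]
  exact Finset.sum_congr rfl fun b _ => by rw [div_eq_mul_inv]; ring

lemma truncPoly_coeff (m b : ℕ) :
    (truncPoly m).coeff b = if b < m then ((Nat.factorial b : ℂ))⁻¹ else 0 := by
  simp only [truncPoly, Polynomial.finset_sum_coeff, Polynomial.coeff_C_mul,
    Polynomial.coeff_X_pow]
  rw [Finset.sum_congr rfl (fun b' _ => by rw [mul_ite, mul_one, mul_zero]),
    Finset.sum_ite_eq (Finset.range m) b fun b' => ((Nat.factorial b' : ℂ))⁻¹]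
  simp [Finset.mem_range]

lemma truncPoly_natDegree (m : ℕ) (hm : 1 ≤ m) : (truncPoly m).natDegree ≤ m - 1 := by
  apply Polynomial.natDegree_sum_le_of_forall_le
  intro b hb
  exact le_trans (Polynomial.natDegree_C_mul_le _ _)
    (le_trans (Polynomial.natDegree_X_pow_le ..) (by
      simp only [Finset.mem_range] at hb; omega))

lemma sum_coeff_mul_truncPoly (m : ℕ) (p : Polynomial ℂ) (z : ℂ) :
    ∑ j ∈ Finset.range m, (p * truncPoly m).coeff j * z ^ j
      = ∑ a ∈ Finset.range m, p.coeff a * z ^ a * truncExp (m - a) z := by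
  have hcoeff : ∀ j ∈ Finset.range m, (p * truncPoly m).coeff j * z ^ j
      = ∑ a ∈ Finset.range (j + 1), p.coeff a * ((Nat.factorial (j - a) : ℂ))⁻¹ * z ^ j := by
    intro j hj
    simp only [Finset.mem_range] at hj
    rw [Polynomial.coeff_mul, Finset.Nat.sum_antidiagonal_eq_sum_range_succ_mk, Finset.sum_mul]
    refine Finset.sum_congr rfl fun a ha => ?_
    simp only [Finset.mem_range] at ha
    rw [truncPoly_coeff, if_pos (by omega)]
  rw [Finset.sum_congr rfl hcoeff]
  have hrhs : ∀ a ∈ Finset.range m, p.coeff a * z ^ a * truncExp (m - a) z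
      = ∑ b ∈ Finset.range (m - a), p.coeff a * ((Nat.factorial b : ℂ))⁻¹ * z ^ (a + b) := by
    intro a ha
    rw [truncExp, Finset.mul_sum]
    refine Finset.sum_congr rfl fun b hb => ?_
    rw [pow_add, div_eq_mul_inv]; ring
  rw [Finset.sum_congr rfl hrhs, Finset.sum_sigma', Finset.sum_sigma']
  refine Finset.sum_nbij' (fun x => ⟨x.2, x.1 - x.2⟩) (fun x => ⟨x.1 + x.2, x.1⟩) ?_ ?_ ?_ ?_ ?_
  · rintro ⟨j, a⟩ h
    simp only [Finset.mem_sigma, Finset.mem_range] at h ⊢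
    omega
  · rintro ⟨a, b⟩ h
    simp only [Finset.mem_sigma, Finset.mem_range] at h ⊢
    omega
  · rintro ⟨j, a⟩ h
    simp only [Finset.mem_sigma, Finset.mem_range] at h
    have e : a + (j - a) = j := by omega
    simp [e]
  · rintro ⟨a, b⟩ h
    simp only [Finset.mem_sigma, Finset.mem_range] at h
    have e : a + b - a = b := by omega
    simp [e]
  · rintro ⟨j, a⟩ h
    simp only [Finset.mem_sigma, Finset.mem_range] at h
    have : a + (j - a) = j := by omega
    rw [this]

lemma keyalg1 (m : ℕ) (η z A P : ℂ) (hη : η ≠ 0) (hz : z ≠ 0) (hηz : η - z ≠ 0)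
    (R1 : A * (η - z) = η ^ m - z ^ m) :
    ((η / z) ^ m - 1) / (η - z) * (-2 * (η ^ m)⁻¹ * P)
      = -2 * P * A * (z ^ m)⁻¹ * (η ^ m)⁻¹ := by
  have hηm : η ^ m ≠ 0 := pow_ne_zero _ hη
  have hzm : z ^ m ≠ 0 := pow_ne_zero _ hz
  rw [div_pow]
  field_simp
  linear_combination P * R1

lemma keyalg2a (m k : ℕ) (η z A : ℂ) (hη : η ≠ 0) (hz : z ≠ 0) (hηz : η - z ≠ 0)
    (R1 : A * (η - z) = η ^ m - z ^ m) :
    ((z / η) ^ m - 1) / (η - z) * η ^ k = -A * η ^ k * (η ^ m)⁻¹ := by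
  have hηm : η ^ m ≠ 0 := pow_ne_zero _ hη
  rw [div_pow]
  field_simp
  linear_combination R1

lemma keyalg2b (m : ℕ) (η z A P Q X E W TT : ℂ) (hη : η ≠ 0) (hz : z ≠ 0)
    (hηz : η - z ≠ 0) (R1 : A * (η - z) = η ^ m - z ^ m) (R2 : X * η ^ m = E - TT)
    (R3 : Q = P * TT) :
    (E * z ^ m - W * η ^ m) / (η - z) * (-2 * (η ^ m)⁻¹ * P)
      = 2 * P * (W - E) / (η - z) + 2 * A * (P * X) + Q * (2 * A) * (η ^ m)⁻¹ := by
  have hηm : η ^ m ≠ 0 := pow_ne_zero _ hη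
  field_simp
  linear_combination (-P * A * (η - z)) * R2 + (-A * (η - z)) * R3 + (-P * E) * R1


lemma part1 (m : ℕ) (hm : 1 ≤ m) (p : Polynomial ℂ) (hdeg : p.natDegree < m)
    (u : ℂ → ℂ) (hu : ∀ η : ℂ, η ≠ 0 → u η = -2 * η ^ (-(m : ℤ)) * p.eval η)
    (z : ℂ) (hz : z ≠ 0) (r : ℝ) (hr : 0 < r) (hrz : r < ‖z‖) :
    (1 / (2 * Real.pi * Complex.I)) *
        (∮ η in C(0, r), ((η / z) ^ m - 1) / (η - z) * u η) = u z := by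
  have h2pi : (2 * (Real.pi : ℂ) * Complex.I) ≠ 0 := by
    simp [Real.pi_ne_zero, Complex.I_ne_zero]
  have hsph : ∀ η ∈ Metric.sphere (0:ℂ) r, η ≠ 0 ∧ η - z ≠ 0 := by
    intro η hη
    simp only [Metric.mem_sphere, dist_zero_right] at hη
    constructor
    · intro h; rw [h] at hη; simp only [norm_zero] at hη; exact hr.ne' hη.symm
    · intro h
      have : η = z := sub_eq_zero.mp h
      rw [this] at hη
      linarith
  have peval : ∀ w : ℂ, p.eval w = ∑ j ∈ Finset.range m, p.coeff j * w ^ j :=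
    fun w => Polynomial.eval_eq_sum_range' hdeg w
  -- pointwise identity on the sphere
  have heq1 : Set.EqOn (fun η => ((η / z) ^ m - 1) / (η - z) * u η)
      (fun η => ∑ i ∈ Finset.range m, ∑ j ∈ Finset.range m,
        (-2 * p.coeff j / z ^ (i + 1)) * η ^ ((j : ℤ) + i - m)) (Metric.sphere 0 r) := by
    intro η hη
    obtain ⟨hη0, hηz⟩ := hsph η hη
    have hηm : η ^ m ≠ 0 := pow_ne_zero _ hη0
    have hzm : z ^ m ≠ 0 := pow_ne_zero _ hz
    simp only
    rw [hu η hη0, zpow_neg, zpow_natCast]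
    have hL : ((η / z) ^ m - 1) / (η - z) * (-2 * (η ^ m)⁻¹ * p.eval η)
        = -2 * p.eval η * (∑ i ∈ Finset.range m, η ^ i * z ^ (m - 1 - i))
            * (z ^ m)⁻¹ * (η ^ m)⁻¹ :=
      keyalg1 m η z _ (p.eval η) hη0 hz hηz (geom_sum₂_mul η z m)
    rw [hL, peval η]
    have hprod : ∀ i ∈ Finset.range m, ∀ j ∈ Finset.range m,
        (-2 * p.coeff j / z ^ (i + 1)) * η ^ ((j : ℤ) + i - m)
          = (-2) * (p.coeff j * η ^ j) * (η ^ i * z ^ (m - 1 - i)) * (z ^ m)⁻¹ * (η ^ m)⁻¹ := by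
      intro i hi j hj
      have hi' : i < m := Finset.mem_range.mp hi
      have hzz : z ^ (m - 1 - i) * z ^ (i + 1) = z ^ m := by
        rw [← pow_add]; congr 1; omega
      have hzpow : η ^ ((j : ℤ) + i - m) = η ^ j * η ^ i * (η ^ m)⁻¹ := by
        rw [zpow_sub₀ hη0, zpow_add₀ hη0, zpow_natCast, zpow_natCast, zpow_natCast,
          div_eq_mul_inv]
      rw [hzpow]
      have hzi : z ^ (i + 1) ≠ 0 := pow_ne_zero _ hz
      field_simp
      linear_combination p.coeff j * hzz
    rw [Finset.sum_congr rfl fun i hi => Finset.sum_congr rfl fun j hj => hprod i hi j hj]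
    simp only [Finset.mul_sum, Finset.sum_mul]
  rw [circleIntegral.integral_congr hr.le heq1]
  rw [cint_sum _ _ (fun i _ => circleIntegrable_finsetSum _
    (fun j _ => circleIntegrable_zpow_sphere hr _ _))]
  have hval : ∀ i ∈ Finset.range m,
      (∮ η in C((0:ℂ), r), ∑ j ∈ Finset.range m,
          (-2 * p.coeff j / z ^ (i + 1)) * η ^ ((j : ℤ) + i - m))
        = (-2 * p.coeff (m - 1 - i) / z ^ (i + 1)) * (2 * Real.pi * Complex.I) := by
    intro i hi
    have hi' : i < m := Finset.mem_range.mp hi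
    rw [cint_sum _ _ (fun j _ => circleIntegrable_zpow_sphere hr _ _)]
    have : ∀ j ∈ Finset.range m,
        (∮ η in C((0:ℂ), r), (-2 * p.coeff j / z ^ (i + 1)) * η ^ ((j : ℤ) + i - m))
          = if j = m - 1 - i then
              (-2 * p.coeff j / z ^ (i + 1)) * (2 * Real.pi * Complex.I) else 0 := by
      intro j hj
      rw [circleIntegral.integral_const_mul, cint_zpow hr]
      simp only [show ((j : ℤ) + i - m = -1) ↔ (j = m - 1 - i) from by
        constructor <;> intro h <;> omega]
      rw [mul_ite, mul_zero]
    rw [Finset.sum_congr rfl this, Finset.sum_ite_eq' (Finset.range m) (m - 1 - i)]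
    rw [if_pos (Finset.mem_range.mpr (by omega))]
  rw [Finset.sum_congr rfl hval, ← Finset.sum_mul]
  rw [hu z hz, zpow_neg, zpow_natCast, peval z]
  have hsum : ∑ i ∈ Finset.range m, -2 * p.coeff (m - 1 - i) / z ^ (i + 1)
      = -2 * (z ^ m)⁻¹ * ∑ j ∈ Finset.range m, p.coeff j * z ^ j := by
    have hre : ∀ i ∈ Finset.range m, -2 * p.coeff (m - 1 - i) / z ^ (i + 1)
        = -2 * p.coeff (m - 1 - i) / z ^ (m - (m - 1 - i)) := by
      intro i hi
      have : i < m := Finset.mem_range.mp hi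
      congr 2
      omega
    rw [Finset.sum_congr rfl hre,
      Finset.sum_range_reflect (fun j => -2 * p.coeff j / z ^ (m - j)) m,
      Finset.mul_sum]
    refine Finset.sum_congr rfl fun j hj => ?_
    have hj' : j < m := Finset.mem_range.mp hj
    have hzz : z ^ (m - j) * z ^ j = z ^ m := by rw [← pow_add]; congr 1; omega
    have h1 : z ^ (m - j) ≠ 0 := pow_ne_zero _ hz
    have h2 : z ^ m ≠ 0 := pow_ne_zero _ hz
    field_simp
    linear_combination p.coeff j * hzz
  rw [hsum]
  field_simp

lemma part2 (m k : ℕ) (hm : 1 ≤ m) (hkm : k < m) (p : Polynomial ℂ) (hdeg : p.natDegree < m)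
    (u : ℂ → ℂ) (hu : ∀ η : ℂ, η ≠ 0 → u η = -2 * η ^ (-(m : ℤ)) * p.eval η)
    (z : ℂ) (hz : z ≠ 0) (r : ℝ) (hr : 0 < r) (hrz : r < ‖z‖)
    (hrepz : z ^ k = ∑ j ∈ Finset.range m, p.coeff j * z ^ j * truncExp (m - j) z) :
    (1 / (2 * Real.pi * Complex.I)) *
        (∮ η in C(0, r),
          ((Complex.exp η * z ^ m - Complex.exp z * η ^ m) / (η - z) * u η +
            ((z / η) ^ m - 1) / (η - z) * η ^ k)) = z ^ k := by
  have h2pi : (2 * (Real.pi : ℂ) * Complex.I) ≠ 0 := by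
    simp [Real.pi_ne_zero, Complex.I_ne_zero]
  have hsph : ∀ η ∈ Metric.sphere (0:ℂ) r, η ≠ 0 ∧ η - z ≠ 0 := by
    intro η hη
    simp only [Metric.mem_sphere, dist_zero_right] at hη
    constructor
    · intro h; rw [h] at hη; simp only [norm_zero] at hη; exact hr.ne' hη.symm
    · intro h
      have : η = z := sub_eq_zero.mp h
      rw [this] at hη
      linarith
  set q : Polynomial ℂ := p * truncPoly m with hqdef
  have hdq : q.natDegree < 2 * m - 1 := by
    have h1 : q.natDegree ≤ p.natDegree + (truncPoly m).natDegree := Polynomial.natDegree_mul_le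
    have h2 := truncPoly_natDegree m hm
    omega
  have qeval : ∀ w : ℂ, q.eval w = ∑ j ∈ Finset.range (2 * m - 1), q.coeff j * w ^ j :=
    fun w => Polynomial.eval_eq_sum_range' hdq w
  set G : ℂ → ℂ := fun η =>
    2 * Polynomial.eval η p * (Complex.exp z - Complex.exp η) / (η - z) +
      2 * (∑ i ∈ Finset.range m, η ^ i * z ^ (m - 1 - i)) *
        (Polynomial.eval η p * expTail m η) with hGdef
  set S2a : ℂ → ℂ := fun η => ∑ i ∈ Finset.range m, ∑ j ∈ Finset.range (2 * m - 1),
    (2 * z ^ (m - 1 - i) * q.coeff j) * η ^ ((j : ℤ) + i - m) with hS2adef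
  set S2b : ℂ → ℂ := fun η => ∑ i ∈ Finset.range m,
    (-(z ^ (m - 1 - i))) * η ^ ((k : ℤ) + i - m) with hS2bdef
  have heq2 : Set.EqOn
      (fun η => (Complex.exp η * z ^ m - Complex.exp z * η ^ m) / (η - z) * u η +
        ((z / η) ^ m - 1) / (η - z) * η ^ k)
      (fun η => G η + (S2a η + S2b η)) (Metric.sphere 0 r) := by
    intro η hη
    obtain ⟨hη0, hηz⟩ := hsph η hη
    have hηm : η ^ m ≠ 0 := pow_ne_zero _ hη0
    simp only
    rw [hu η hη0, zpow_neg, zpow_natCast]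
    have R1 := geom_sum₂_mul η z m
    have R2 : expTail m η * η ^ m = Complex.exp η - truncExp m η := expTail_mul_pow m η hη0
    have R3 : q.eval η = Polynomial.eval η p * truncExp m η := by
      rw [hqdef, Polynomial.eval_mul, truncPoly_eval]
    rw [keyalg2b m η z _ (Polynomial.eval η p) (q.eval η) (expTail m η) (Complex.exp η)
      (Complex.exp z) (truncExp m η) hη0 hz hηz R1 R2 R3,
      keyalg2a m k η z _ hη0 hz hηz R1]
    have hS2a : S2a η = q.eval η * (2 * (∑ i ∈ Finset.range m, η ^ i * z ^ (m - 1 - i)))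
        * (η ^ m)⁻¹ := by
      rw [hS2adef]
      simp only
      have hterm : ∀ i ∈ Finset.range m, ∀ j ∈ Finset.range (2 * m - 1),
          (2 * z ^ (m - 1 - i) * q.coeff j) * η ^ ((j : ℤ) + i - m)
            = 2 * (q.coeff j * η ^ j) * (η ^ i * z ^ (m - 1 - i)) * (η ^ m)⁻¹ := by
        intro i _ j _
        have hzpow : η ^ ((j : ℤ) + i - m) = η ^ j * η ^ i * (η ^ m)⁻¹ := by
          rw [zpow_sub₀ hη0, zpow_add₀ hη0, zpow_natCast, zpow_natCast, zpow_natCast,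
            div_eq_mul_inv]
        rw [hzpow]; ring
      have expand : Polynomial.eval η q * (2 * (∑ i ∈ Finset.range m, η ^ i * z ^ (m - 1 - i)))
          * (η ^ m)⁻¹ = ∑ j ∈ Finset.range (2 * m - 1), ∑ i ∈ Finset.range m,
            (q.coeff j * η ^ j) * (2 * (η ^ i * z ^ (m - 1 - i)) * (η ^ m)⁻¹) := by
        rw [qeval η, Finset.sum_mul, Finset.sum_mul]
        refine Finset.sum_congr rfl fun j _ => ?_
        rw [Finset.mul_sum, Finset.mul_sum, Finset.sum_mul]
        exact Finset.sum_congr rfl fun i _ => by ring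
      rw [Finset.sum_congr rfl fun i hi => Finset.sum_congr rfl fun j hj => hterm i hi j hj,
        expand, Finset.sum_comm]
      exact Finset.sum_congr rfl fun j _ => Finset.sum_congr rfl fun i _ => by ring
    have hS2b : S2b η = -(∑ i ∈ Finset.range m, η ^ i * z ^ (m - 1 - i)) * η ^ k
        * (η ^ m)⁻¹ := by
      rw [hS2bdef]
      simp only
      have hterm : ∀ i ∈ Finset.range m,
          (-(z ^ (m - 1 - i))) * η ^ ((k : ℤ) + i - m)
            = (η ^ i * z ^ (m - 1 - i)) * (-(η ^ k) * (η ^ m)⁻¹) := by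
        intro i _
        have hzpow : η ^ ((k : ℤ) + i - m) = η ^ k * η ^ i * (η ^ m)⁻¹ := by
          rw [zpow_sub₀ hη0, zpow_add₀ hη0, zpow_natCast, zpow_natCast, zpow_natCast,
            div_eq_mul_inv]
        rw [hzpow]; ring
      rw [Finset.sum_congr rfl hterm, ← Finset.sum_mul]
      ring
    rw [hS2a, hS2b, hGdef]
    simp only
    ring
  rw [circleIntegral.integral_congr hr.le heq2]
  -- integrability
  have hS2ai : CircleIntegrable S2a 0 r := circleIntegrable_finsetSum _
    (fun i _ => circleIntegrable_finsetSum _ (fun j _ => circleIntegrable_zpow_sphere hr _ _))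
  have hS2bi : CircleIntegrable S2b 0 r := circleIntegrable_finsetSum _
    (fun i _ => circleIntegrable_zpow_sphere hr _ _)
  have hGd : ∀ x ∈ Metric.closedBall (0:ℂ) r, DifferentiableAt ℂ G x := by
    intro x hx
    have hxz : x - z ≠ 0 := by
      intro h
      have hx' : ‖x‖ ≤ r := by simpa [Metric.mem_closedBall, dist_zero_right] using hx
      have : x = z := sub_eq_zero.mp h
      rw [this] at hx'
      linarith
    have d1 : DifferentiableAt ℂ
        (fun η => 2 * Polynomial.eval η p * (Complex.exp z - Complex.exp η)) x :=
      ((differentiableAt_const _).mul (Polynomial.differentiableAt p)).mul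
        ((differentiableAt_const _).sub Complex.differentiable_exp.differentiableAt)
    have d2 : DifferentiableAt ℂ
        (fun η => 2 * Polynomial.eval η p * (Complex.exp z - Complex.exp η) / (η - z)) x :=
      d1.div (differentiableAt_id.sub (differentiableAt_const z)) hxz
    have d3 : DifferentiableAt ℂ (fun η : ℂ => ∑ i ∈ Finset.range m, η ^ i * z ^ (m - 1 - i)) x :=
      DifferentiableAt.fun_sum fun i _ => (differentiableAt_pow i).mul_const _
    have d4 : DifferentiableAt ℂ
        (fun η => 2 * (∑ i ∈ Finset.range m, η ^ i * z ^ (m - 1 - i)) *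
          (Polynomial.eval η p * expTail m η)) x :=
      ((differentiableAt_const _).mul d3).mul
        ((Polynomial.differentiableAt p).mul ((expTail_differentiable m) x))
    exact (d2.add d4)
  have hGi : CircleIntegrable G 0 r :=
    ContinuousOn.circleIntegrable hr.le fun x hx =>
      ((hGd x (Metric.sphere_subset_closedBall hx)).continuousAt).continuousWithinAt
  have hsplit : (∮ η in C((0:ℂ), r), (G η + (S2a η + S2b η)))
      = (∮ η in C((0:ℂ), r), G η) +
        ((∮ η in C((0:ℂ), r), S2a η) + ∮ η in C((0:ℂ), r), S2b η) := by
    have h1 : (∮ η in C((0:ℂ), r), (G η + (S2a η + S2b η)))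
        = (∮ η in C((0:ℂ), r), G η) + ∮ η in C((0:ℂ), r), (S2a η + S2b η) :=
      cint_add hGi (hS2ai.add hS2bi)
    rw [h1, cint_add hS2ai hS2bi]
  rw [hsplit, cint_analytic_zero hr.le hGd]
  -- S2a integral
  have hvala : (∮ η in C((0:ℂ), r), S2a η)
      = (∑ i ∈ Finset.range m, 2 * z ^ (m - 1 - i) * q.coeff (m - 1 - i))
          * (2 * Real.pi * Complex.I) := by
    show (∮ η in C((0:ℂ), r), ∑ i ∈ Finset.range m, ∑ j ∈ Finset.range (2 * m - 1),
      (2 * z ^ (m - 1 - i) * q.coeff j) * η ^ ((j : ℤ) + i - m)) = _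
    rw [cint_sum _ _ (fun i _ => circleIntegrable_finsetSum _
      (fun j _ => circleIntegrable_zpow_sphere hr _ _))]
    have hinner : ∀ i ∈ Finset.range m,
        (∮ η in C((0:ℂ), r), ∑ j ∈ Finset.range (2 * m - 1),
            (2 * z ^ (m - 1 - i) * q.coeff j) * η ^ ((j : ℤ) + i - m))
          = (2 * z ^ (m - 1 - i) * q.coeff (m - 1 - i)) * (2 * Real.pi * Complex.I) := by
      intro i hi
      have hi' : i < m := Finset.mem_range.mp hi
      rw [cint_sum _ _ (fun j _ => circleIntegrable_zpow_sphere hr _ _)]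
      have hcol : ∀ j ∈ Finset.range (2 * m - 1),
          (∮ η in C((0:ℂ), r), (2 * z ^ (m - 1 - i) * q.coeff j) * η ^ ((j : ℤ) + i - m))
            = if j = m - 1 - i then
                (2 * z ^ (m - 1 - i) * q.coeff j) * (2 * Real.pi * Complex.I) else 0 := by
        intro j hj
        rw [circleIntegral.integral_const_mul, cint_zpow hr]
        simp only [show ((j : ℤ) + i - m = -1) ↔ (j = m - 1 - i) from by
          constructor <;> intro h <;> omega]
        rw [mul_ite, mul_zero]
      rw [Finset.sum_congr rfl hcol, Finset.sum_ite_eq' (Finset.range (2 * m - 1)) (m - 1 - i)]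
      rw [if_pos (Finset.mem_range.mpr (by omega))]
    rw [Finset.sum_congr rfl hinner, ← Finset.sum_mul]
  -- S2b integral
  have hvalb : (∮ η in C((0:ℂ), r), S2b η) = (-(z ^ k)) * (2 * Real.pi * Complex.I) := by
    show (∮ η in C((0:ℂ), r), ∑ i ∈ Finset.range m,
      (-(z ^ (m - 1 - i))) * η ^ ((k : ℤ) + i - m)) = _
    rw [cint_sum _ _ (fun i _ => circleIntegrable_zpow_sphere hr _ _)]
    have hcol : ∀ i ∈ Finset.range m,
        (∮ η in C((0:ℂ), r), (-(z ^ (m - 1 - i))) * η ^ ((k : ℤ) + i - m))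
          = if i = m - 1 - k then
              (-(z ^ (m - 1 - i))) * (2 * Real.pi * Complex.I) else 0 := by
      intro i hi
      rw [circleIntegral.integral_const_mul, cint_zpow hr]
      simp only [show ((k : ℤ) + i - m = -1) ↔ (i = m - 1 - k) from by
        constructor <;> intro h <;> omega]
      rw [mul_ite, mul_zero]
    rw [Finset.sum_congr rfl hcol, Finset.sum_ite_eq' (Finset.range m) (m - 1 - k)]
    rw [if_pos (Finset.mem_range.mpr (by omega))]
    congr 3
    omega
  rw [hvala, hvalb]
  -- the coefficient sum equals z^k via hrep
  have hsum : ∑ i ∈ Finset.range m, 2 * z ^ (m - 1 - i) * q.coeff (m - 1 - i) = 2 * z ^ k := by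
    have := Finset.sum_range_reflect (fun j => 2 * z ^ j * q.coeff j) m
    rw [this]
    have h2 : ∑ j ∈ Finset.range m, 2 * z ^ j * q.coeff j
        = 2 * ∑ j ∈ Finset.range m, q.coeff j * z ^ j := by
      rw [Finset.mul_sum]
      exact Finset.sum_congr rfl fun j _ => by ring
    rw [h2, hqdef, sum_coeff_mul_truncPoly m p z, ← hrepz]
  rw [hsum]
  field_simp
  ring

end KernelAux

theorem kernel_columns_of_fredholm_equation (m k : ℕ) (hm : 1 ≤ m) (hk : k ≤ m - 1)
    (p : Polynomial ℂ) (hp : p.degree ≤ (m - 1 : ℕ))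
    (hrep : ∀ ζ : ℂ, ζ ^ k = ∑ j ∈ Finset.range m, p.coeff j * ζ ^ j * truncExp (m - j) ζ)
    (u : ℂ → ℂ) (hu : ∀ η : ℂ, η ≠ 0 → u η = -2 * η ^ (-(m : ℤ)) * p.eval η)
    (z : ℂ) (hz : z ≠ 0) (r : ℝ) (hr : 0 < r) (hrz : r < ‖z‖) :
    (1 / (2 * Real.pi * Complex.I)) *
        (∮ η in C(0, r), ((η / z) ^ m - 1) / (η - z) * u η) = u z ∧
      (1 / (2 * Real.pi * Complex.I)) *
          (∮ η in C(0, r),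
            ((Complex.exp η * z ^ m - Complex.exp z * η ^ m) / (η - z) * u η +
              ((z / η) ^ m - 1) / (η - z) * η ^ k)) = z ^ k := by
  have hnd : p.natDegree ≤ m - 1 := Polynomial.natDegree_le_iff_degree_le.mpr hp
  have hdeg : p.natDegree < m := by omega
  have hkm : k < m := by omega
  exact ⟨KernelAux.part1 m hm p hdeg u hu z hz r hr hrz,
    KernelAux.part2 m k hm hkm p hdeg u hu z hz r hr hrz (hrep z)⟩
end

section
/- Let a be a real number with 0 < a < 2, let x₀ = e^{iaπ/4}, and let x₁ = x₀·(x₀² + a − 1)/(i·((a−1)·x₀² + 1)). Then (a−1)·x₀² + 1 ≠ 0 and |x₁| = 1. (This shows the initial data of the discrete Painlevé II recurrence lie on the unit circle, consistent with the invariant |x_n| = 1 of the separatrix solution encoding the diagonal of the discrete map Z^a.) -/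
open Complex

theorem painleveII_initial_data_on_unit_circle (a : ℝ) (ha : 0 < a) (ha2 : a < 2) :
    ((a : ℂ) - 1) * Complex.exp (Complex.I * a * Real.pi / 4) ^ 2 + 1 ≠ 0 ∧
      ‖(Complex.exp (Complex.I * a * Real.pi / 4) *
            (Complex.exp (Complex.I * a * Real.pi / 4) ^ 2 + (a : ℂ) - 1) /
          (Complex.I *
            (((a : ℂ) - 1) * Complex.exp (Complex.I * a * Real.pi / 4) ^ 2 + 1)))‖ = 1 := by
  set w : ℂ := Complex.exp (Complex.I * a * Real.pi / 4) with hw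
  have habsw : ‖w‖ = 1 := by
    rw [hw, Complex.norm_exp]
    simp [Complex.mul_re, Complex.div_re]
  have hw2 : w ^ 2 = Complex.exp (↑(a * Real.pi / 2) * Complex.I) := by
    rw [hw, ← Complex.exp_nat_mul]
    congr 1
    push_cast
    ring
  have him : (w ^ 2).im = Real.sin (a * Real.pi / 2) := by
    rw [hw2, Complex.exp_ofReal_mul_I_im]
  have hsin : 0 < Real.sin (a * Real.pi / 2) := by
    apply Real.sin_pos_of_pos_of_lt_pi
    · positivity
    · nlinarith [Real.pi_pos]
  have hden : ((a : ℂ) - 1) * w ^ 2 + 1 ≠ 0 := by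
    intro h
    have h2 : (((a : ℂ) - 1) * w ^ 2 + 1).im = 0 := by rw [h]; simp
    simp only [Complex.add_im, Complex.mul_im, Complex.one_im, Complex.sub_im,
      Complex.ofReal_im, Complex.sub_re, Complex.ofReal_re, Complex.one_re] at h2
    have ha1 : a = 1 := by
      rcases eq_or_ne a 1 with h1 | h1
      · exact h1
      · exfalso
        have h3 : (a - 1) * (w ^ 2).im = 0 := by linarith [h2]
        rcases mul_eq_zero.mp h3 with h4 | h4
        · exact h1 (by linarith)
        · rw [him] at h4; linarith
    rw [ha1] at h
    simp at h
  refine ⟨hden, ?_⟩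
  have habsw2 : ‖w ^ 2‖ = 1 := by rw [norm_pow, habsw]; norm_num
  have hconj : w ^ 2 * (starRingEnd ℂ) (w ^ 2) = 1 := by
    rw [Complex.mul_conj, ← Complex.sq_norm, habsw2]; norm_num
  have hc : ((a : ℂ) - 1) * w ^ 2 + 1 = w ^ 2 * ((starRingEnd ℂ) (w ^ 2 + ((a : ℂ) - 1))) := by
    rw [map_add, map_sub, mul_add, hconj.symm]
    simp [Complex.conj_ofReal]
    ring
  have hkey : ‖w ^ 2 + ((a : ℂ) - 1)‖ =
      ‖((a : ℂ) - 1) * w ^ 2 + 1‖ := by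
    rw [hc, norm_mul, habsw2, Complex.norm_conj, one_mul]
  rw [norm_div, norm_mul, norm_mul, habsw, Complex.norm_I, one_mul, one_mul]
  have hre : w ^ 2 + (a : ℂ) - 1 = w ^ 2 + ((a : ℂ) - 1) := by ring
  rw [hre, hkey, div_self]
  exact norm_ne_zero_iff.mpr hden
end
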